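/- Let p < q be distinct primes and let p̄ ∈ [1, q-1] and q̄ ∈ [1, p-1] be the inverses of p mod q and q mod p respectively. Then the number of nonzero coefficients of Φ_{pq}(X) equals 2·p̄·q̄ − 1. -/
import Mathlib


open Polynomial Finset

lemma inj_aux {p q : ℕ} (hp : 0 < p) (hq : Nat.Prime q) (hqp : ¬ q ∣ p)
    {i i' j j' : ℕ} (hi : i < q) (hi' : i' < q)
    (heq : i * p + j * q = i' * p + j' * q) : i = i' ∧ j = j' := by
  have hq' : Prime (q : ℤ) := Nat.prime_iff_prime_int.mp hq
  have hdvd : (q:ℤ) ∣ ((i:ℤ) - i') * p := ⟨(j':ℤ) - j, by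
    have : (i:ℤ) * p + j * q = i' * p + j' * q := by exact_mod_cast heq
    ring_nf
    ring_nf at this
    linarith⟩
  rcases hq'.dvd_mul.mp hdvd with h1 | h2
  · have hii : (i:ℤ) - i' = 0 := Int.eq_zero_of_abs_lt_dvd h1 (by rw [abs_lt]; omega)
    have hii' : i = i' := by omega
    subst hii'
    refine ⟨rfl, Nat.eq_of_mul_eq_mul_right hq.pos ?_⟩
    exact Nat.add_left_cancel heq
  · exact absurd (Int.natCast_dvd_natCast.mp h2) hqp

lemma geom_aux (m n : ℕ) : ((X:ℤ[X])^m - 1) * (∑ i ∈ range n, X^(i*m)) = X^(m*n) - 1 := by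
  have h : ∀ i : ℕ, (X:ℤ[X])^(i*m) = (X^m)^i := fun i => by rw [← pow_mul, mul_comm]
  simp_rw [h]
  rw [mul_comm, geom_sum_mul, ← pow_mul]

lemma key_identity (p q pbar qbar : ℕ) (hp1 : 1 ≤ p) (hq1 : 1 ≤ q)
    (hpbar : pbar ≤ q) (hqbar : qbar ≤ p)
    (h : p * pbar + q * qbar = p * q + 1) :
    ((X:ℤ[X])^p - 1) * ((X:ℤ[X])^q - 1) *
      ((∑ i ∈ range pbar, (X:ℤ[X])^(i*p)) * (∑ j ∈ range qbar, (X:ℤ[X])^(j*q))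
        - X * ((∑ i ∈ range (q - pbar), (X:ℤ[X])^(i*p)) * (∑ j ∈ range (p - qbar), (X:ℤ[X])^(j*q))))
    = ((X:ℤ[X]) - 1) * ((X:ℤ[X])^(p*q) - 1) := by
  have hc : p * (q - pbar) + 1 = q * qbar := by
    have h1 : p * (q - pbar) = p * q - p * pbar := Nat.mul_sub_left_distrib p q pbar
    have h2 : p * pbar ≤ p * q := Nat.mul_le_mul_left p hpbar
    omega
  have hd : q * (p - qbar) + 1 = p * pbar := by
    have h1 : q * (p - qbar) = q * p - q * qbar := Nat.mul_sub_left_distrib q p qbar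
    have h2 : q * qbar ≤ q * p := Nat.mul_le_mul_left q hqbar
    rw [Nat.mul_comm q p] at h1 h2
    omega
  have e1 := geom_aux p pbar
  have e2 := geom_aux q qbar
  have e3 := geom_aux p (q - pbar)
  have e4 := geom_aux q (p - qbar)
  have step : ((X:ℤ[X])^p - 1) * ((X:ℤ[X])^q - 1) *
      ((∑ i ∈ range pbar, (X:ℤ[X])^(i*p)) * (∑ j ∈ range qbar, (X:ℤ[X])^(j*q))
        - X * ((∑ i ∈ range (q - pbar), (X:ℤ[X])^(i*p)) * (∑ j ∈ range (p - qbar), (X:ℤ[X])^(j*q))))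
      = ((X:ℤ[X])^(p*pbar) - 1) * ((X:ℤ[X])^(q*qbar) - 1)
        - X * (((X:ℤ[X])^(p*(q-pbar)) - 1) * ((X:ℤ[X])^(q*(p-qbar)) - 1)) := by
    rw [← e1, ← e2, ← e3, ← e4]; ring
  rw [step]
  set c := p * (q - pbar) with hcdef
  set d := q * (p - qbar) with hddef
  have hb : q * qbar = c + 1 := by omega
  have ha : p * pbar = d + 1 := by omega
  have hpq : p * q = c + d + 1 := by omega
  rw [ha, hb, hpq, pow_succ, pow_succ, pow_add, pow_add]
  ring

lemma cyclo_eq (p q : ℕ) (hp : p.Prime) (hq : q.Prime) (hpq : p < q) :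
    ((X:ℤ[X])^p - 1) * ((X:ℤ[X])^q - 1) * cyclotomic (p*q) ℤ
      = ((X:ℤ[X]) - 1) * ((X:ℤ[X])^(p*q) - 1) := by
  have h1p : 1 < p := hp.one_lt
  have h1q : 1 < q := hq.one_lt
  have hqpq : q < p * q := lt_mul_left hq.pos h1p
  have hdiv : (p*q).divisors = {1, p, q, p*q} := by
    rw [Nat.divisors_mul, hp.divisors, hq.divisors]
    ext a
    simp only [Finset.mem_mul, Finset.mem_insert, Finset.mem_singleton]
    constructor
    · rintro ⟨b, hb, c, hc, rfl⟩
      rcases hb with rfl | rfl <;> rcases hc with rfl | rfl <;> simp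
    · rintro (h | h | h | h)
      · exact ⟨1, Or.inl rfl, 1, Or.inl rfl, by omega⟩
      · exact ⟨p, Or.inr rfl, 1, Or.inl rfl, by omega⟩
      · exact ⟨1, Or.inl rfl, q, Or.inr rfl, by omega⟩
      · exact ⟨p, Or.inr rfl, q, Or.inr rfl, h.symm⟩
  have hppos : 0 < p * q := by positivity
  have hprod := prod_cyclotomic_eq_X_pow_sub_one hppos ℤ
  rw [hdiv] at hprod
  have hXp := prod_cyclotomic_eq_X_pow_sub_one hp.pos ℤ
  rw [hp.divisors, Finset.prod_pair (by omega : (1:ℕ) ≠ p)] at hXp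
  have hXq := prod_cyclotomic_eq_X_pow_sub_one hq.pos ℤ
  rw [hq.divisors, Finset.prod_pair (by omega : (1:ℕ) ≠ q)] at hXq
  rw [Finset.prod_insert (by simp; omega), Finset.prod_insert (by simp; omega),
    Finset.prod_insert (by simp; omega), Finset.prod_singleton] at hprod
  rw [← hXp, ← hXq, ← hprod, cyclotomic_one]
  ring

lemma coeff_sum_X_pow (S : Finset ℕ) (k : ℕ) :
    (∑ n ∈ S, (X:ℤ[X])^n).coeff k = if k ∈ S then 1 else 0 := by
  rw [finset_sum_coeff]
  simp_rw [coeff_X_pow]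
  exact Finset.sum_ite_eq S k 1

theorem cyclotomic_binary_support_card (p q pbar qbar : ℕ) (hp : p.Prime) (hq : q.Prime)
    (hpq : p < q) (hpbar : 1 ≤ pbar) (hpbar' : pbar ≤ q - 1)
    (hqbar : 1 ≤ qbar) (hqbar' : qbar ≤ p - 1)
    (h : p * pbar + q * qbar = p * q + 1) :
    (cyclotomic (p * q) ℤ).support.card = 2 * pbar * qbar - 1 := by
  have hp1 : 1 < p := hp.one_lt
  have hq1 : 1 < q := hq.one_lt
  have hqp : ¬ q ∣ p := fun hd => by have := Nat.le_of_dvd hp.pos hd; omega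
  set A : Finset ℕ := (range pbar ×ˢ range qbar).image (fun ij => ij.1 * p + ij.2 * q) with hAdef
  set B : Finset ℕ := ((range (q - pbar) ×ˢ range (p - qbar)).image
      (fun ij => ij.1 * p + ij.2 * q)).image (· + 1) with hBdef
  -- injectivity on products
  have hinj : ∀ a : ℕ, a ≤ q → ∀ b : ℕ, ∀ x ∈ range a ×ˢ range b, ∀ y ∈ range a ×ˢ range b,
      (fun ij : ℕ × ℕ => ij.1 * p + ij.2 * q) x = (fun ij : ℕ × ℕ => ij.1 * p + ij.2 * q) y →
      x = y := by
    intro a ha b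
    rintro ⟨i, j⟩ hij ⟨i', j'⟩ hij' heq
    simp only [Finset.mem_product, Finset.mem_range] at hij hij'
    simp only at heq
    have := inj_aux hp.pos hq hqp (by omega : i < q) (by omega : i' < q) heq
    exact Prod.ext this.1 this.2
  have hA : ∀ (a : ℕ), a ≤ q → ∀ b : ℕ,
      (∑ i ∈ range a, (X:ℤ[X])^(i*p)) * (∑ j ∈ range b, (X:ℤ[X])^(j*q))
      = ∑ n ∈ (range a ×ˢ range b).image (fun ij => ij.1 * p + ij.2 * q), (X:ℤ[X])^n := by
    intro a ha b
    rw [Finset.sum_image (g := fun ij : ℕ × ℕ => ij.1 * p + ij.2 * q)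
      (f := fun n => (X:ℤ[X])^n) (hinj a ha b)]
    rw [Finset.sum_mul_sum, Finset.sum_product]
    simp_rw [← pow_add]
  have hB : X * ((∑ i ∈ range (q - pbar), (X:ℤ[X])^(i*p)) *
      (∑ j ∈ range (p - qbar), (X:ℤ[X])^(j*q))) = ∑ n ∈ B, (X:ℤ[X])^n := by
    rw [hA (q - pbar) (by omega) (p - qbar), hBdef,
      Finset.sum_image (g := (· + 1)) (f := fun n => (X:ℤ[X])^n) (fun x _ y _ hxy => by simpa using hxy),
      Finset.mul_sum]
    refine Finset.sum_congr rfl fun n _ => ?_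
    rw [pow_succ, mul_comm]
  -- identify the cyclotomic polynomial with the explicit sum
  have hne : ((X:ℤ[X])^p - 1) * ((X:ℤ[X])^q - 1) ≠ 0 := by
    have h1 := X_pow_sub_C_ne_zero hp.pos (1:ℤ)
    have h2 := X_pow_sub_C_ne_zero hq.pos (1:ℤ)
    rw [map_one] at h1 h2
    exact mul_ne_zero h1 h2
  have hΦ : (∑ n ∈ A, (X:ℤ[X])^n) - ∑ n ∈ B, (X:ℤ[X])^n = cyclotomic (p*q) ℤ := by
    apply mul_left_cancel₀ hne
    rw [cyclo_eq p q hp hq hpq, ← key_identity p q pbar qbar (by omega) (by omega)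
      (by omega) (by omega) h, hA pbar (by omega) qbar, hB]
  -- disjointness of the two exponent sets
  have hdisj : Disjoint A B := by
    rw [Finset.disjoint_left]
    intro n hnA hnB
    rw [hAdef, Finset.mem_image] at hnA
    rw [hBdef, Finset.mem_image] at hnB
    obtain ⟨⟨i, j⟩, hij, rfl⟩ := hnA
    obtain ⟨m, hm, hmeq⟩ := hnB
    rw [Finset.mem_image] at hm
    obtain ⟨⟨i', j'⟩, hij', rfl⟩ := hm
    simp only [Finset.mem_product, Finset.mem_range] at hij hij'
    simp only at hmeq
    have heq2 : i * p + (j + p) * q = (i' + pbar) * p + (j' + qbar) * q := by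
      have e1 : (j + p) * q = j * q + p * q := by ring
      have e2 : (i' + pbar) * p = i' * p + p * pbar := by ring
      have e3 : (j' + qbar) * q = j' * q + q * qbar := by ring
      omega
    have := inj_aux hp.pos hq hqp (by omega : i < q) (by omega : i' + pbar < q) heq2
    omega
  -- compute the support
  have hsupp : (cyclotomic (p*q) ℤ).support = A ∪ B := by
    ext k
    rw [mem_support_iff, ← hΦ, coeff_sub, coeff_sum_X_pow, coeff_sum_X_pow, Finset.mem_union]
    by_cases hkA : k ∈ A <;> by_cases hkB : k ∈ B
    · exact absurd hkB (Finset.disjoint_left.mp hdisj hkA)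
    · simp [hkA, hkB]
    · simp [hkA, hkB]
    · simp [hkA, hkB]
  have hcardA : A.card = pbar * qbar := by
    rw [hAdef, Finset.card_image_of_injOn (fun x hx y hy => hinj pbar (by omega) qbar x hx y hy),
      Finset.card_product, Finset.card_range, Finset.card_range]
  have hcardB : B.card = (q - pbar) * (p - qbar) := by
    rw [hBdef, Finset.card_image_of_injOn (fun x _ y _ hxy => by simpa using hxy),
      Finset.card_image_of_injOn (fun x hx y hy => hinj (q - pbar) (by omega) (p - qbar) x hx y hy),
      Finset.card_product, Finset.card_range, Finset.card_range]
  rw [hsupp, Finset.card_union_of_disjoint hdisj, hcardA, hcardB]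
  have hZ : (p:ℤ) * pbar + q * qbar = p * q + 1 := by exact_mod_cast h
  have h1 : 1 ≤ pbar * qbar := Nat.one_le_iff_ne_zero.mpr (by positivity)
  have key : (q - pbar) * (p - qbar) = pbar * qbar - 1 := by
    have e : ((q:ℤ) - pbar) * ((p:ℤ) - qbar) = (pbar:ℤ) * qbar - 1 := by linear_combination -hZ
    have e2 : ((q - pbar : ℕ) : ℤ) * ((p - qbar : ℕ) : ℤ) = ((pbar * qbar - 1 : ℕ) : ℤ) := by
      rw [Nat.cast_sub (by omega), Nat.cast_sub (by omega), Nat.cast_sub h1]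
      push_cast
      linarith [e]
    exact_mod_cast e2
  have hassoc : 2 * pbar * qbar = 2 * (pbar * qbar) := by ring
  omega
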